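/- If a graph contains two distinct cycles sharing at least two vertices, then it contains a cycle of even length. -/

import Mathlib

open SimpleGraph Finset

open scoped Classical in
/-- The adjacency matrix of a graph over `ℝ` (using classical decidability). -/
noncomputable def adjMat {V : Type*} [Fintype V] [DecidableEq V] (G : SimpleGraph V) :
    Matrix V V ℝ :=
  fun a b => if G.Adj a b then 1 else 0

theorem adjMat_isHermitian {V : Type*} [Fintype V] [DecidableEq V] (G : SimpleGraph V) :
    (adjMat G).IsHermitian := by
  ext a b
  rw [Matrix.conjTranspose_apply]
  by_cases h : G.Adj a b
  · simp [adjMat, h, h.symm]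
  · simp [adjMat, h, mt (fun h' : G.Adj b a => h'.symm) h]

/-- The spectral radius (specRad) (largest adjacency eigenvalue) of a graph. -/
noncomputable def specRad {V : Type*} [Fintype V] [DecidableEq V]
    (G : SimpleGraph V) : ℝ :=
  ⨆ a : V, (adjMat_isHermitian G).eigenvalues a

/-- A cactus: any two distinct cycles (distinct as edge sets) share at most one vertex. -/
def IsCactus {V : Type*} [DecidableEq V] (G : SimpleGraph V) : Prop :=
  ∀ ⦃u v : V⦄ (c₁ : G.Walk u u) (c₂ : G.Walk v v), c₁.IsCycle → c₂.IsCycle →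
    c₁.edges.toFinset ≠ c₂.edges.toFinset →
      (c₁.support.toFinset ∩ c₂.support.toFinset).card ≤ 1

/-- A unicyclic graph: connected with exactly one cycle (one cycle edge set). -/
def Unicyclic {V : Type*} [DecidableEq V] (G : SimpleGraph V) : Prop :=
  G.Connected ∧ ∃! E : Finset (Sym2 V), ∃ (w : V) (c : G.Walk w w),
    c.IsCycle ∧ c.edges.toFinset = E

/-- The star `K_{1,n-1}` on `Fin n` with center `0`. -/
def starGraph (n : ℕ) : SimpleGraph (Fin n) where
  Adj a b := a ≠ b ∧ ((a : ℕ) = 0 ∨ (b : ℕ) = 0)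
  symm := ⟨by tauto⟩
  loopless := ⟨by tauto⟩

/-- `K_{1,n-1}^+`: the star plus one edge between the leaves `1` and `2`. -/
def starPlus (n : ℕ) : SimpleGraph (Fin n) where
  Adj a b := a ≠ b ∧ ((a : ℕ) = 0 ∨ (b : ℕ) = 0 ∨ ((a : ℕ) ≤ 2 ∧ (b : ℕ) ≤ 2))
  symm := ⟨by tauto⟩
  loopless := ⟨by tauto⟩

/-- `H_n`: the star `K_{1,n-1}` plus `⌊(n-1)/2⌋` independent edges `(1,2), (3,4), …`
between pairs of leaves. -/
def Hgraph (n : ℕ) : SimpleGraph (Fin n) where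
  Adj a b := a ≠ b ∧ ((a : ℕ) = 0 ∨ (b : ℕ) = 0 ∨
    ((a : ℕ) % 2 = 1 ∧ (b : ℕ) = a + 1) ∨ ((b : ℕ) % 2 = 1 ∧ (a : ℕ) = b + 1))
  symm := ⟨by tauto⟩
  loopless := ⟨by tauto⟩

/-- Rewiring: delete the edges `v w` and add the edges `u w` for `w ∈ S`. -/
def rewire {V : Type*} (G : SimpleGraph V) (u v : V) (S : Set V) : SimpleGraph V :=
  SimpleGraph.fromEdgeSet ((G.edgeSet \ {e | ∃ w ∈ S, e = s(v, w)}) ∪ {e | ∃ w ∈ S, e = s(u, w)})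

/-- An edge lies in a triangle of `G`. -/
def InTriangle {V : Type*} (G : SimpleGraph V) (e : Sym2 V) : Prop :=
  ∃ a b c : V, G.Adj a b ∧ G.Adj b c ∧ G.Adj a c ∧
    (e = s(a, b) ∨ e = s(b, c) ∨ e = s(a, c))

namespace EvenCycleAux

open SimpleGraph Walk

variable {V : Type*} {G : SimpleGraph V}

lemma length_pos_of_ne {a b : V} (p : G.Walk a b) (h : a ≠ b) : 1 ≤ p.length := by
  cases p with
  | nil => exact absurd rfl h
  | cons h' t => simp [Nat.succ_le_succ]

lemma end_mem_support_tail {v : V} (c : G.Walk v v) (h : c ≠ Walk.nil) :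
    v ∈ c.support.tail := by
  cases c with
  | nil => exact absurd rfl h
  | cons h' t => simpa using t.end_mem_support

lemma path_length_one_of_mem_edge {a b : V} {p : G.Walk a b} (hp : p.IsPath)
    (he : s(a, b) ∈ p.edges) : p.length = 1 := by
  cases p with
  | nil => simp at he
  | @cons _ c _ h t =>
    rw [Walk.edges_cons, List.mem_cons] at he
    rcases he with he | he
    · rw [Sym2.eq_iff] at he
      rcases he with ⟨-, hbc⟩ | ⟨hac, -⟩
      · subst hbc
        have : t = Walk.nil := (Walk.isPath_iff_eq_nil (p := t)).mp hp.of_cons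
        simp [this]
      · exact absurd hac h.ne
    · have hmem : a ∈ t.support := t.fst_mem_support_of_mem_edges he
      rw [Walk.cons_isPath_iff] at hp
      exact absurd hmem hp.2

lemma length_one_edges {a b : V} {p : G.Walk a b} (h : p.length = 1) :
    p.edges = [s(a, b)] := by
  cases p with
  | nil => simp at h
  | @cons _ c _ hadj t =>
    have ht : t.length = 0 := by simpa using h
    cases t with
    | nil => simp
    | cons _ _ => simp at ht

lemma isCycle_append_reverse {a b : V} {p q : G.Walk a b} (hp : p.IsPath) (hq : q.IsPath)
    (hab : a ≠ b)
    (hint : ∀ z, z ∈ p.support → z ∈ q.support → z = a ∨ z = b)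
    (hlen : 3 ≤ p.length + q.length) :
    (p.append q.reverse).IsCycle := by
  have hdisj : ∀ e ∈ p.edges, e ∉ q.edges := by
    intro e hep heq
    induction e using Sym2.ind with
    | _ x y =>
      have hxp : x ∈ p.support := p.fst_mem_support_of_mem_edges hep
      have hyp : y ∈ p.support := p.snd_mem_support_of_mem_edges hep
      have hxq : x ∈ q.support := q.fst_mem_support_of_mem_edges heq
      have hyq : y ∈ q.support := q.snd_mem_support_of_mem_edges heq
      have hxy : x ≠ y := (p.adj_of_mem_edges hep).ne
      rcases hint x hxp hxq with rfl | rfl <;> rcases hint y hyp hyq with rfl | rfl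
      · exact hxy rfl
      · have h1 := path_length_one_of_mem_edge hp hep
        have h2 := path_length_one_of_mem_edge hq heq
        omega
      · rw [Sym2.eq_swap] at hep heq
        have h1 := path_length_one_of_mem_edge hp hep
        have h2 := path_length_one_of_mem_edge hq heq
        omega
      · exact hxy rfl
  rw [Walk.isCycle_def]
  refine ⟨?_, ?_, ?_⟩
  · rw [Walk.isTrail_def, Walk.edges_append, Walk.edges_reverse]
    refine List.Nodup.append hp.isTrail.edges_nodup
      (List.nodup_reverse.mpr hq.isTrail.edges_nodup) ?_
    intro e he1 he2
    exact hdisj e he1 (List.mem_reverse.mp he2)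
  · intro hnil
    have := congrArg Walk.length hnil
    rw [Walk.length_append, Walk.length_reverse] at this
    simp only [Walk.length_nil] at this
    omega
  · rw [Walk.tail_support_append]
    have hp' := hp.support_nodup
    rw [p.support_eq_cons, List.nodup_cons] at hp'
    have hq' := hq.reverse.support_nodup
    rw [q.reverse.support_eq_cons, List.nodup_cons] at hq'
    refine List.Nodup.append hp'.2 hq'.2 ?_
    intro z hz1 hz2
    have hzp : z ∈ p.support := by rw [p.support_eq_cons]; exact List.mem_cons_of_mem _ hz1
    have hzq : z ∈ q.support := by
      have hz3 : z ∈ q.reverse.support := List.mem_of_mem_tail hz2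
      rwa [Walk.support_reverse, List.mem_reverse] at hz3
    rcases hint z hzp hzq with rfl | rfl
    · exact hp'.1 hz1
    · exact hq'.1 hz2

lemma takeUntil_isPath_of_isCycle [DecidableEq V] {a b : V} {c : G.Walk a a} (hc : c.IsCycle)
    (hb : b ∈ c.support) (hba : b ≠ a) :
    (c.takeUntil b hb).IsPath ∧ (c.dropUntil b hb).IsPath := by
  have hsup : (c.takeUntil b hb).support ++ (c.dropUntil b hb).support.tail = c.support := by
    rw [← Walk.support_append, c.take_spec hb]
  have hT : c.support.tail.Nodup := hc.support_nodup
  rw [(c.takeUntil b hb).support_eq_cons, c.support_eq_cons, List.cons_append] at hsup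
  injection hsup with _ hTsplit
  rw [← hTsplit, List.nodup_append] at hT
  obtain ⟨hnd1, hnd2, hdisj⟩ := hT
  have ha2 : a ∈ (c.dropUntil b hb).support.tail :=
    Walk.end_mem_tail_support_of_ne hba (c.dropUntil b hb)
  have hb1 : b ∈ (c.takeUntil b hb).support.tail :=
    Walk.end_mem_tail_support_of_ne hba.symm (c.takeUntil b hb)
  constructor
  · exact Walk.IsPath.mk' (by
      rw [(c.takeUntil b hb).support_eq_cons, List.nodup_cons]
      exact ⟨fun h => hdisj _ h _ ha2 rfl, hnd1⟩)
  · exact Walk.IsPath.mk' (by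
      rw [(c.dropUntil b hb).support_eq_cons, List.nodup_cons]
      exact ⟨fun h => hdisj _ hb1 _ h rfl, hnd2⟩)

lemma find_first [DecidableEq V] (S : Finset V) {z y : V} (t : G.Walk z y) :
    t.IsPath → z ∉ S → y ∈ S →
    ∃ (b : V) (q : G.Walk z b) (r : G.Walk b y), b ∈ S ∧ q.IsPath ∧ 1 ≤ q.length ∧
      (∀ w ∈ q.support, w ∈ S → w = b) ∧
      q.support ++ r.support.tail = t.support ∧ q.edges ++ r.edges = t.edges := by
  induction t with
  | nil => intro _ hz hy; exact absurd hy hz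
  | @cons z w y hadj t' ih =>
    intro hp hz hy
    by_cases hw : w ∈ S
    · refine ⟨w, Walk.cons hadj Walk.nil, t', hw, by simp [hadj.ne], by simp, ?_, ?_, ?_⟩
      · intro u hu huS
        simp only [Walk.support_cons, Walk.support_nil, List.mem_cons,
          List.not_mem_nil, or_false, List.mem_singleton] at hu
        rcases hu with rfl | rfl
        · exact absurd huS hz
        · rfl
      · rw [← Walk.support_append]; rfl
      · rw [← Walk.edges_append]; rfl
    · obtain ⟨b, q', r', hbS, hq'p, hq'l, hint', hsupp', hedges'⟩ := ih hp.of_cons hw hy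
      have hsub : q'.support ⊆ t'.support := hsupp' ▸ List.subset_append_left _ _
      have hzq' : z ∉ q'.support := fun h =>
        ((Walk.cons_isPath_iff hadj t').mp hp).2 (hsub h)
      refine ⟨b, Walk.cons hadj q', r', hbS, hq'p.cons hzq', by simp, ?_, ?_, ?_⟩
      · intro u hu huS
        rw [Walk.support_cons, List.mem_cons] at hu
        rcases hu with rfl | hu
        · exact absurd huS hz
        · exact hint' u hu huS
      · simp [hsupp']
      · simp [hedges']

lemma arc_exists [DecidableEq V] (S : Finset V) (F : Finset (Sym2 V)) {x y : V}
    (p : G.Walk x y) :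
    p.IsPath → x ∈ S → y ∈ S →
    (∀ e ∈ p.edges, e ∈ F) ∨
    ∃ (a b : V) (R : G.Walk a b), R.IsPath ∧ a ∈ S ∧ b ∈ S ∧ a ≠ b ∧
      (∀ z ∈ R.support, z ∈ S → z = a ∨ z = b) ∧
      (2 ≤ R.length ∨ ∃ e ∈ R.edges, e ∉ F) := by
  induction p with
  | nil => intro _ _ _; left; simp
  | @cons x w y hadj t ih =>
    intro hp hx hy
    by_cases hw : w ∈ S
    · by_cases hf : s(x, w) ∈ F
      · rcases ih hp.of_cons hw hy with hall | ⟨a, b, R, hR, ha, hb, hab, hint, hor⟩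
        · left
          intro e he
          rw [Walk.edges_cons, List.mem_cons] at he
          rcases he with rfl | he
          · exact hf
          · exact hall e he
        · exact Or.inr ⟨a, b, R, hR, ha, hb, hab, hint, hor⟩
      · refine Or.inr ⟨x, w, Walk.cons hadj Walk.nil, by simp [hadj.ne], hx, hw, hadj.ne,
          ?_, Or.inr ⟨s(x, w), by simp, hf⟩⟩
        intro z hz hzS
        simp only [Walk.support_cons, Walk.support_nil, List.mem_cons,
          List.not_mem_nil, or_false, List.mem_singleton] at hz
        tauto
    · obtain ⟨b, q, r, hbS, hqp, hql, hqint, hsupp, hedges⟩ := find_first S t hp.of_cons hw hy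
      have hsub : q.support ⊆ t.support := hsupp ▸ List.subset_append_left _ _
      have hzq : x ∉ q.support := fun h => ((Walk.cons_isPath_iff hadj t).mp hp).2 (hsub h)
      have hxb : x ≠ b := fun h => hzq (by rw [h]; exact q.end_mem_support)
      refine Or.inr ⟨x, b, Walk.cons hadj q, hqp.cons hzq, hx, hbS, hxb, ?_,
        Or.inl (by rw [Walk.length_cons]; omega)⟩
      intro z hz hzS
      rw [Walk.support_cons, List.mem_cons] at hz
      rcases hz with rfl | hz
      · exact Or.inl rfl
      · exact Or.inr (hqint z hz hzS)

lemma aux {V : Type*} [Fintype V] [DecidableEq V] (G : SimpleGraph V) {u v : V}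
    (c₁ : G.Walk u u) (c₂ : G.Walk v v) (h₁ : c₁.IsCycle) (h₂ : c₂.IsCycle)
    (he : ∃ e ∈ c₂.edges, e ∉ c₁.edges)
    (hcommon : 2 ≤ (c₁.support.toFinset ∩ c₂.support.toFinset).card) :
    ∃ (w : V) (c : G.Walk w w), c.IsCycle ∧ Even c.length := by
  by_cases hev : Even c₁.length
  · exact ⟨u, c₁, h₁, hev⟩
  obtain ⟨x, hx, y, hy, hxy⟩ := Finset.one_lt_card.mp
    (by omega : 1 < (c₁.support.toFinset ∩ c₂.support.toFinset).card)
  rw [Finset.mem_inter, List.mem_toFinset, List.mem_toFinset] at hx hy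
  obtain ⟨e₀, he₀c₂, he₀F⟩ := he
  have hx2 : x ∈ c₂.support := hx.2
  have harc : ∃ (a b : V) (R : G.Walk a b), R.IsPath ∧ a ∈ c₁.support.toFinset ∧
      b ∈ c₁.support.toFinset ∧ a ≠ b ∧
      (∀ z ∈ R.support, z ∈ c₁.support.toFinset → z = a ∨ z = b) ∧
      (2 ≤ R.length ∨ ∃ e ∈ R.edges, e ∉ c₁.edges.toFinset) := by
    have hc : (c₂.rotate x hx2).IsCycle := h₂.rotate _
    have he₀c : e₀ ∈ (c₂.rotate x hx2).edges :=
      (Walk.rotate_edges c₂ x hx2).perm.mem_iff.mpr he₀c₂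
    have hyt : y ∈ c₂.support.tail := by
      have hy2 := hy.2
      rw [c₂.support_eq_cons, List.mem_cons] at hy2
      rcases hy2 with rfl | h
      · exact end_mem_support_tail c₂ h₂.isCircuit.ne_nil
      · exact h
    have hy' : y ∈ (c₂.rotate x hx2).support :=
      List.mem_of_mem_tail ((Walk.support_rotate c₂ x hx2).perm.mem_iff.mpr hyt)
    generalize c₂.rotate x hx2 = c at hc he₀c hy'
    have he₀F' : e₀ ∉ c₁.edges.toFinset := by
      rw [List.mem_toFinset]; exact he₀F
    have hxS : x ∈ c₁.support.toFinset := List.mem_toFinset.mpr hx.1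
    have hyS : y ∈ c₁.support.toFinset := List.mem_toFinset.mpr hy.1
    cases c with
    | nil => exact absurd rfl hc.isCircuit.ne_nil
    | @cons _ x₁ _ hadj t =>
      have htp : t.IsPath := by
        have h' := hc.support_nodup
        rw [Walk.support_cons, List.tail_cons] at h'
        exact Walk.IsPath.mk' h'
      by_cases hx₁ : x₁ ∈ c₁.support.toFinset
      · by_cases hf : s(x, x₁) ∈ c₁.edges.toFinset
        · rcases arc_exists c₁.support.toFinset c₁.edges.toFinset t htp hx₁ hxS with
            hall | ⟨a, b, R, hR, ha, hb, hab, hint, hor⟩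
          · exfalso
            rw [Walk.edges_cons, List.mem_cons] at he₀c
            apply he₀F'
            rcases he₀c with rfl | h
            · exact hf
            · exact hall _ h
          · exact ⟨a, b, R, hR, ha, hb, hab, hint, hor⟩
        · refine ⟨x, x₁, Walk.cons hadj Walk.nil, by simp [hadj.ne], hxS, hx₁, hadj.ne,
            ?_, Or.inr ⟨s(x, x₁), by simp, hf⟩⟩
          intro z hz hzS
          simp only [Walk.support_cons, Walk.support_nil, List.mem_cons,
            List.not_mem_nil, or_false, List.mem_singleton] at hz
          tauto
      · obtain ⟨b, q, r, hbS, hqp, hql, hqint, hsupp, hedges⟩ :=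
          find_first c₁.support.toFinset t htp hx₁ hxS
        have hbx : b ≠ x := by
          rintro rfl
          cases r with
          | nil =>
            have hq : q.support = t.support := by simpa using hsupp
            have hyt' : y ∈ t.support := by
              rw [Walk.support_cons, List.mem_cons] at hy'
              rcases hy' with rfl | h
              · exact absurd rfl hxy
              · exact h
            rw [← hq] at hyt'
            exact hxy (hqint y hyt' hyS).symm
          | @cons _ w' _ hadj' r' =>
            have htxq : b ∈ q.support := q.end_mem_support
            have hxr : b ∈ r'.support := r'.end_mem_support
            have hnd : t.support.Nodup := htp.support_nodup
            rw [← hsupp, Walk.support_cons, List.tail_cons] at hnd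
            exact List.disjoint_of_nodup_append hnd htxq hxr
        have hxq : x ∉ q.support := fun h => hbx ((hqint x h hxS).symm)
        refine ⟨x, b, Walk.cons hadj q, hqp.cons hxq, hxS, hbS, fun h => hbx h.symm,
          ?_, Or.inl (by rw [Walk.length_cons]; omega)⟩
        intro z hz hzS
        rw [Walk.support_cons, List.mem_cons] at hz
        rcases hz with rfl | hz
        · exact Or.inl rfl
        · exact Or.inr (hqint z hz hzS)
  obtain ⟨a, b, R, hRp, haS, hbS, hab, hintR, horR⟩ := harc
  have ha1 : a ∈ c₁.support := List.mem_toFinset.mp haS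
  have hdc : (c₁.rotate a ha1).IsCycle := h₁.rotate _
  have hdsupset : ∀ z, z ∈ (c₁.rotate a ha1).support → z ∈ c₁.support := by
    intro z hz
    rw [(c₁.rotate a ha1).support_eq_cons, List.mem_cons] at hz
    rcases hz with rfl | hz
    · exact ha1
    · exact List.mem_of_mem_tail ((Walk.support_rotate c₁ a ha1).perm.mem_iff.mp hz)
  have hbd : b ∈ (c₁.rotate a ha1).support := by
    have hb1 : b ∈ c₁.support := List.mem_toFinset.mp hbS
    have hbt : b ∈ c₁.support.tail := by
      rw [c₁.support_eq_cons, List.mem_cons] at hb1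
      rcases hb1 with rfl | h
      · exact end_mem_support_tail c₁ h₁.isCircuit.ne_nil
      · exact h
    exact List.mem_of_mem_tail ((Walk.support_rotate c₁ a ha1).perm.mem_iff.mpr hbt)
  obtain ⟨hP1, hP2⟩ := takeUntil_isPath_of_isCycle hdc hbd hab.symm
  have hrotedges : ∀ e, e ∈ (c₁.rotate a ha1).edges → e ∈ c₁.edges :=
    fun e h => (Walk.rotate_edges c₁ a ha1).perm.mem_iff.mp h
  have hP1e : ((c₁.rotate a ha1).takeUntil b hbd).edges ⊆ c₁.edges :=
    fun e h => hrotedges e (Walk.edges_takeUntil_subset _ _ h)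
  have hP2e : ((c₁.rotate a ha1).dropUntil b hbd).edges ⊆ c₁.edges :=
    fun e h => hrotedges e (Walk.edges_dropUntil_subset _ _ h)
  have hP1s : ∀ z ∈ ((c₁.rotate a ha1).takeUntil b hbd).support, z ∈ c₁.support :=
    fun z h => hdsupset z (Walk.support_takeUntil_subset _ _ h)
  have hP2s : ∀ z ∈ ((c₁.rotate a ha1).dropUntil b hbd).support, z ∈ c₁.support :=
    fun z h => hdsupset z (Walk.support_dropUntil_subset _ _ h)
  have hlen12 : ((c₁.rotate a ha1).takeUntil b hbd).length
      + ((c₁.rotate a ha1).dropUntil b hbd).length = c₁.length := by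
    have h1 := congrArg Walk.length ((c₁.rotate a ha1).take_spec hbd)
    rw [Walk.length_append] at h1
    have h2 := congrArg Walk.length (c₁.take_spec ha1)
    rw [Walk.length_append] at h2
    have h3 : (c₁.rotate a ha1).length
        = (c₁.dropUntil a ha1).length + (c₁.takeUntil a ha1).length := by
      unfold Walk.rotate
      rw [Walk.length_append]
    omega
  have hP1l : 1 ≤ ((c₁.rotate a ha1).takeUntil b hbd).length :=
    length_pos_of_ne _ hab
  have hP2l : 1 ≤ ((c₁.rotate a ha1).dropUntil b hbd).length :=
    length_pos_of_ne _ hab.symm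
  have hRl : 1 ≤ R.length := length_pos_of_ne R hab
  have build : ∀ (p : G.Walk a b), p.IsPath → (∀ z ∈ p.support, z ∈ c₁.support) →
      p.edges ⊆ c₁.edges → 1 ≤ p.length → (p.append R.reverse).IsCycle := by
    intro p hpp hps hpe hpl
    apply isCycle_append_reverse hpp hRp hab
    · intro z hzp hzR
      exact hintR z hzR (List.mem_toFinset.mpr (hps z hzp))
    · rcases horR with h2 | ⟨e0, he0R, he0F⟩
      · omega
      · by_contra hcon
        push_neg at hcon
        have hp1 : p.length = 1 := by omega
        have hR1 : R.length = 1 := by omega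
        have hpedges := length_one_edges hp1
        have hRedges := length_one_edges hR1
        rw [hRedges, List.mem_singleton] at he0R
        subst he0R
        apply he0F
        rw [List.mem_toFinset]
        exact hpe (by rw [hpedges]; exact List.mem_singleton_self _)
  have hc1 : ((((c₁.rotate a ha1).takeUntil b hbd)).append R.reverse).IsCycle :=
    build _ hP1 hP1s hP1e hP1l
  have hc2 : ((((c₁.rotate a ha1).dropUntil b hbd).reverse).append R.reverse).IsCycle :=
    build _ hP2.reverse
      (by intro z hz; rw [Walk.support_reverse, List.mem_reverse] at hz; exact hP2s z hz)
      (by intro e he; rw [Walk.edges_reverse, List.mem_reverse] at he; exact hP2e he)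
      (by rw [Walk.length_reverse]; exact hP2l)
  rcases Nat.even_or_odd (((c₁.rotate a ha1).takeUntil b hbd).length + R.length) with h | h
  · refine ⟨a, _, hc1, ?_⟩
    rwa [Walk.length_append, Walk.length_reverse]
  · refine ⟨a, _, hc2, ?_⟩
    rw [Walk.length_append, Walk.length_reverse, Walk.length_reverse]
    rw [Nat.even_iff]
    rw [Nat.odd_iff] at h
    rw [Nat.not_even_iff] at hev
    omega

end EvenCycleAux
theorem even_cycle_of_two_cycles_sharing_two_vertices {V : Type*} [Fintype V] [DecidableEq V]
    (G : SimpleGraph V) (u v : V) (c₁ : G.Walk u u) (c₂ : G.Walk v v)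
    (h₁ : c₁.IsCycle) (h₂ : c₂.IsCycle)
    (hne : c₁.edges.toFinset ≠ c₂.edges.toFinset)
    (hcommon : 2 ≤ (c₁.support.toFinset ∩ c₂.support.toFinset).card) :
    ∃ (w : V) (c : G.Walk w w), c.IsCycle ∧ Even c.length := by
  obtain ⟨e, hel⟩ : ∃ e, (e ∈ c₁.edges.toFinset ∧ e ∉ c₂.edges.toFinset) ∨
      (e ∈ c₂.edges.toFinset ∧ e ∉ c₁.edges.toFinset) := by
    by_contra hc
    push_neg at hc
    apply hne
    ext e
    exact ⟨fun h => (hc e).1 h, fun h => (hc e).2 h⟩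
  rcases hel with ⟨hA, hB⟩ | ⟨hA, hB⟩
  · exact EvenCycleAux.aux G c₂ c₁ h₂ h₁
      ⟨e, List.mem_toFinset.mp hA, fun h => hB (List.mem_toFinset.mpr h)⟩
      (by rwa [Finset.inter_comm] at hcommon)
  · exact EvenCycleAux.aux G c₁ c₂ h₁ h₂
      ⟨e, List.mem_toFinset.mp hA, fun h => hB (List.mem_toFinset.mpr h)⟩
      hcommon
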